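/- Let (Ω, 𝒜, ℙ) be a probability space, 𝒳 a Banach space, and μ, ν probability measures on Ω absolutely continuous with respect to ℙ with bounded densities dμ/dℙ, dν/dℙ ≤ K. Then for every φ ∈ L²(Ω, ℙ; 𝒳), ‖∫ φ dμ − ∫ φ dν‖_𝒳 ≤ 2 (2K)^{1/2} ‖φ‖_{L²(Ω,ℙ;𝒳)} d_Hell(μ, ν). -/

import Mathlib

set_option linter.unnecessarySimpa false

open MeasureTheory

theorem stmt9 {Ω : Type*} [MeasurableSpace Ω] {𝒳 : Type*}
    [NormedAddCommGroup 𝒳] [NormedSpace ℝ 𝒳] [CompleteSpace 𝒳]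
    (ℙ μ ν : Measure Ω) [IsProbabilityMeasure ℙ] [IsProbabilityMeasure μ]
    [IsProbabilityMeasure ν]
    (hμ : μ ≪ ℙ) (hν : ν ≪ ℙ)
    (K : ℝ) (hK : 0 < K)
    (hμK : ∀ᵐ ω ∂ℙ, μ.rnDeriv ℙ ω ≤ ENNReal.ofReal K)
    (hνK : ∀ᵐ ω ∂ℙ, ν.rnDeriv ℙ ω ≤ ENNReal.ofReal K)
    (φ : Ω → 𝒳) (hφ : MemLp φ 2 ℙ) :
    ‖(∫ ω, φ ω ∂μ) - ∫ ω, φ ω ∂ν‖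
      ≤ 2 * Real.sqrt (2 * K) * (eLpNorm φ 2 ℙ).toReal *
        Real.sqrt ((1/2) * ∫ ω, (Real.sqrt ((μ.rnDeriv ℙ ω).toReal)
          - Real.sqrt ((ν.rnDeriv ℙ ω).toReal))^2 ∂ℙ) := by
  set f : Ω → ℝ := fun ω => (μ.rnDeriv ℙ ω).toReal with hf_def
  set g : Ω → ℝ := fun ω => (ν.rnDeriv ℙ ω).toReal with hg_def
  have hfm : Measurable f := (Measure.measurable_rnDeriv μ ℙ).ennreal_toReal
  have hgm : Measurable g := (Measure.measurable_rnDeriv ν ℙ).ennreal_toReal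
  have hf0 : ∀ ω, 0 ≤ f ω := fun ω => ENNReal.toReal_nonneg
  have hg0 : ∀ ω, 0 ≤ g ω := fun ω => ENNReal.toReal_nonneg
  have hfK : ∀ᵐ ω ∂ℙ, f ω ≤ K := by
    filter_upwards [hμK] with ω h
    simp only [hf_def]
    simpa [ENNReal.toReal_ofReal hK.le] using
      ENNReal.toReal_mono ENNReal.ofReal_ne_top h
  have hgK : ∀ᵐ ω ∂ℙ, g ω ≤ K := by
    filter_upwards [hνK] with ω h
    simpa [hg_def, ENNReal.toReal_ofReal hK.le] using
      ENNReal.toReal_mono ENNReal.ofReal_ne_top h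
  have hφ1 : Integrable φ ℙ := hφ.integrable one_le_two
  have hφn : Integrable (fun ω => ‖φ ω‖) ℙ := hφ1.norm
  -- integrability of density • φ
  have hint : ∀ (h : Ω → ℝ), Measurable h → (∀ ω, 0 ≤ h ω) → (∀ᵐ ω ∂ℙ, h ω ≤ K) →
      Integrable (fun ω => h ω • φ ω) ℙ := by
    intro h hm h0 hbd
    refine Integrable.mono' (hφn.const_mul K)
      (hm.aemeasurable.aestronglyMeasurable.smul hφ.1) ?_
    filter_upwards [hbd] with ω hb
    rw [norm_smul, Real.norm_of_nonneg (h0 ω)]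
    exact mul_le_mul_of_nonneg_right hb (norm_nonneg _)
  have hfφ := hint f hfm hf0 hfK
  have hgφ := hint g hgm hg0 hgK
  -- rewrite the difference of integrals
  have hdiff : (∫ ω, φ ω ∂μ) - ∫ ω, φ ω ∂ν = ∫ ω, (f ω - g ω) • φ ω ∂ℙ := by
    rw [← integral_rnDeriv_smul hμ (f := φ), ← integral_rnDeriv_smul hν (f := φ),
      ← integral_sub hfφ hgφ]
    simp [sub_smul]
  set F : Ω → ℝ := fun ω => |Real.sqrt (f ω) - Real.sqrt (g ω)| with hF_def
  have hFm : Measurable F := ((hfm.sqrt.sub hgm.sqrt)).abs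
  have hF0 : ∀ ω, 0 ≤ F ω := fun ω => abs_nonneg _
  have hFbd : ∀ᵐ ω ∂ℙ, F ω ≤ Real.sqrt K := by
    filter_upwards [hfK, hgK] with ω h1 h2
    rw [abs_sub_le_iff]
    constructor
    · calc Real.sqrt (f ω) - Real.sqrt (g ω) ≤ Real.sqrt (f ω) := by
            simpa using Real.sqrt_nonneg (g ω)
        _ ≤ Real.sqrt K := Real.sqrt_le_sqrt h1
    · calc Real.sqrt (g ω) - Real.sqrt (f ω) ≤ Real.sqrt (g ω) := by
            simpa using Real.sqrt_nonneg (f ω)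
        _ ≤ Real.sqrt K := Real.sqrt_le_sqrt h2
  -- step 1: norm of difference bounded via integral of norms
  have step1 : ‖(∫ ω, φ ω ∂μ) - ∫ ω, φ ω ∂ν‖ ≤ ∫ ω, |f ω - g ω| * ‖φ ω‖ ∂ℙ := by
    rw [hdiff]
    refine (norm_integral_le_integral_norm _).trans_eq ?_
    refine integral_congr_ae (Filter.Eventually.of_forall fun ω => ?_)
    simp [norm_smul, Real.norm_eq_abs]
  -- step 2: pointwise bound  |f-g| ≤ 2√K * F
  have hFint : Integrable (fun ω => (2 * Real.sqrt K) * (F ω * ‖φ ω‖)) ℙ := by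
    refine Integrable.mono' (g := fun ω => (2 * Real.sqrt K * Real.sqrt K) * ‖φ ω‖)
      (hφn.const_mul _)
      (aestronglyMeasurable_const.mul (hFm.aemeasurable.aestronglyMeasurable.mul hφ.1.norm)) ?_
    filter_upwards [hFbd] with ω hb
    rw [Real.norm_eq_abs,
      abs_of_nonneg (mul_nonneg (by positivity) (mul_nonneg (hF0 ω) (norm_nonneg _)))]
    nlinarith [Real.sqrt_nonneg K, norm_nonneg (φ ω), hF0 ω,
      mul_le_mul_of_nonneg_right hb (norm_nonneg (φ ω))]
  have step2 : ∫ ω, |f ω - g ω| * ‖φ ω‖ ∂ℙ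
      ≤ (2 * Real.sqrt K) * ∫ ω, F ω * ‖φ ω‖ ∂ℙ := by
    rw [← integral_const_mul]
    refine integral_mono_ae ((hfφ.sub hgφ).norm.congr ?_) hFint ?_
    · refine Filter.Eventually.of_forall fun ω => ?_
      simp [Pi.sub_apply, ← sub_smul, norm_smul, Real.norm_eq_abs]
    · filter_upwards [hfK, hgK] with ω h1 h2
      have e1 : f ω - g ω = (Real.sqrt (f ω) - Real.sqrt (g ω)) *
          (Real.sqrt (f ω) + Real.sqrt (g ω)) := by
        have := Real.sq_sqrt (hf0 ω); have := Real.sq_sqrt (hg0 ω); nlinarith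
      have e2 : |f ω - g ω| = F ω * (Real.sqrt (f ω) + Real.sqrt (g ω)) := by
        rw [e1, abs_mul, hF_def]
        congr 1
        exact abs_of_nonneg (by positivity)
      rw [e2]
      have h3 : Real.sqrt (f ω) + Real.sqrt (g ω) ≤ 2 * Real.sqrt K := by
        have := Real.sqrt_le_sqrt h1; have := Real.sqrt_le_sqrt h2; linarith
      calc F ω * (Real.sqrt (f ω) + Real.sqrt (g ω)) * ‖φ ω‖
          ≤ F ω * (2 * Real.sqrt K) * ‖φ ω‖ :=
            mul_le_mul_of_nonneg_right (mul_le_mul_of_nonneg_left h3 (hF0 ω)) (norm_nonneg _)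
        _ = 2 * Real.sqrt K * (F ω * ‖φ ω‖) := by ring
  -- step 3: Cauchy-Schwarz
  have h2 : (ENNReal.ofReal (2:ℝ)) = 2 := by norm_num
  have hFmem : MemLp F (ENNReal.ofReal (2:ℝ)) ℙ := by
    rw [h2]
    exact MemLp.of_bound hFm.aemeasurable.aestronglyMeasurable (Real.sqrt K)
      (by filter_upwards [hFbd] with ω hb; rwa [Real.norm_of_nonneg (hF0 ω)])
  have hGmem : MemLp (fun ω => ‖φ ω‖) (ENNReal.ofReal (2:ℝ)) ℙ := by rw [h2]; exact hφ.norm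
  have step3 : ∫ ω, F ω * ‖φ ω‖ ∂ℙ
      ≤ (∫ ω, F ω ^ (2:ℝ) ∂ℙ) ^ ((1:ℝ)/2) * (∫ ω, ‖φ ω‖ ^ (2:ℝ) ∂ℙ) ^ ((1:ℝ)/2) := by
    exact integral_mul_le_Lp_mul_Lq_of_nonneg (Real.holderConjugate_iff_eq_conjExponent
        (by norm_num) |>.mpr (by norm_num))
      (Filter.Eventually.of_forall hF0) (Filter.Eventually.of_forall fun ω => norm_nonneg _)
      hFmem hGmem
  -- identify the pieces with the goal's RHS
  set I : ℝ := ∫ ω, (Real.sqrt (f ω) - Real.sqrt (g ω))^2 ∂ℙ with hI_def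
  have hI0 : 0 ≤ I :=
    integral_nonneg fun ω => sq_nonneg _
  have hIF : ∫ ω, F ω ^ (2:ℝ) ∂ℙ = I := by
    refine integral_congr_ae (Filter.Eventually.of_forall fun ω => ?_)
    show F ω ^ (2:ℝ) = _
    rw [Real.rpow_two, hF_def, sq_abs]
  have hE : (eLpNorm φ 2 ℙ).toReal = (∫ ω, ‖φ ω‖ ^ (2:ℝ) ∂ℙ) ^ ((1:ℝ)/2) := by
    rw [hφ.eLpNorm_eq_integral_rpow_norm two_ne_zero ENNReal.ofNat_ne_top,
      ENNReal.toReal_ofReal (by positivity)]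
    norm_num
  have hφ2 : (0:ℝ) ≤ (∫ ω, ‖φ ω‖ ^ (2:ℝ) ∂ℙ) ^ ((1:ℝ)/2) := by positivity
  have key : ‖(∫ ω, φ ω ∂μ) - ∫ ω, φ ω ∂ν‖
      ≤ 2 * Real.sqrt K * (I ^ ((1:ℝ)/2) * (∫ ω, ‖φ ω‖ ^ (2:ℝ) ∂ℙ) ^ ((1:ℝ)/2)) := by
    refine step1.trans (step2.trans ?_)
    rw [← hIF]
    exact mul_le_mul_of_nonneg_left step3 (by positivity)
  refine key.trans_eq ?_
  rw [hE]
  rw [← Real.sqrt_eq_rpow I]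
  have : Real.sqrt (1/2 * I) = Real.sqrt (1/2) * Real.sqrt I := Real.sqrt_mul (by norm_num) I
  rw [this]
  have h2K : Real.sqrt (2*K) = Real.sqrt 2 * Real.sqrt K := Real.sqrt_mul (by norm_num) K
  have h12 : Real.sqrt 2 * Real.sqrt (1/2) = 1 := by
    rw [← Real.sqrt_mul (by norm_num)]
    norm_num
  rw [h2K]
  linear_combination (-(2 * Real.sqrt K * ((∫ ω, ‖φ ω‖ ^ (2:ℝ) ∂ℙ) ^ ((1:ℝ)/2)) *
    Real.sqrt I)) * h12
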